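/- Residual bound for approximate inverse iteration: with M symmetric, λ̄ satisfying |λ₁(M) − λ̄| ≤ δ, λ̄ not an eigenvalue, x = (M − λ̄I)^{−1} e_{j₀} where j₀ maximizes ‖(M − λ̄I)^{−1} e_j‖₂, and z = x/‖x‖₂, one has ‖(M − λ₁(M)I) z‖₂ ≤ δ√n + δ. -/

import Mathlib

/-- Residual bound for approximate inverse iteration: with `T` symmetric on `ℝⁿ`,
orthonormal eigenvectors `z_ℓ`, sorted eigenvalues `μ_ℓ` (smallest `μ₁ = λ₁`),
`λ̄` a noneigenvalue with `|λ₁ − λ̄| ≤ δ`, `A = (T − λ̄ I)⁻¹`, `x = A e_{j₀}` where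
`j₀` maximizes `‖A e_j‖`, and `w = x/‖x‖`, one has `‖(T − λ₁ I) w‖ ≤ δ√n + δ`. -/
theorem stmt15 (n : ℕ) (hn : 0 < n)
    (T : EuclideanSpace ℝ (Fin n) →L[ℝ] EuclideanSpace ℝ (Fin n)) (hT : IsSelfAdjoint T)
    (μ : Fin n → ℝ) (hmono : Monotone μ)
    (z : Fin n → EuclideanSpace ℝ (Fin n)) (hON : Orthonormal ℝ z)
    (heig : ∀ ℓ, T (z ℓ) = μ ℓ • z ℓ)
    (lamb δ : ℝ) (hδ : 0 < δ)
    (h1 : 0 < |μ ⟨0, hn⟩ - lamb|) (h2 : |μ ⟨0, hn⟩ - lamb| ≤ δ)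
    (hne : ∀ ℓ, μ ℓ ≠ lamb)
    (A : EuclideanSpace ℝ (Fin n) →L[ℝ] EuclideanSpace ℝ (Fin n))
    (hA : ∀ v, T (A v) - lamb • A v = v)
    (j₀ : Fin n)
    (hj₀ : ∀ j : Fin n, ‖A (EuclideanSpace.single j (1:ℝ))‖
            ≤ ‖A (EuclideanSpace.single j₀ (1:ℝ))‖)
    (x : EuclideanSpace ℝ (Fin n)) (hx : x = A (EuclideanSpace.single j₀ (1:ℝ)))
    (hx0 : x ≠ 0)
    (w : EuclideanSpace ℝ (Fin n)) (hw : w = ‖x‖⁻¹ • x) :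
    ‖T w - μ ⟨0, hn⟩ • w‖ ≤ δ * Real.sqrt n + δ := by
  haveI : Nonempty (Fin n) := Fin.pos_iff_nonempty.mp hn
  set μ₁ := μ ⟨0, hn⟩ with hμ₁
  set z₁ := z ⟨0, hn⟩ with hz₁
  have hcard : Fintype.card (Fin n) = Module.finrank ℝ (EuclideanSpace ℝ (Fin n)) := by simp
  set b0 := basisOfOrthonormalOfCardEqFinrank hON hcard with hb0
  have hb0coe : ⇑b0 = z := coe_basisOfOrthonormalOfCardEqFinrank hON hcard
  have hb0on : Orthonormal ℝ b0 := by rw [hb0coe]; exact hON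
  set b := b0.toOrthonormalBasis hb0on with hb
  have hbcoe : ⇑b = z := by rw [hb, Module.Basis.coe_toOrthonormalBasis, hb0coe]
  -- injectivity of T - lamb
  have key : ∀ u : EuclideanSpace ℝ (Fin n), T u - lamb • u = 0 → u = 0 := by
    intro u hu
    have hin : ∀ ℓ, (inner ℝ (z ℓ) u : ℝ) = 0 := by
      intro ℓ
      have h := congrArg (fun v => (inner ℝ (z ℓ) v : ℝ)) hu
      simp only [inner_sub_right, real_inner_smul_right, inner_zero_right] at h
      have hTzu : (inner ℝ (z ℓ) (T u) : ℝ) = μ ℓ * inner ℝ (z ℓ) u := by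
        have hsym : (inner ℝ (T (z ℓ)) u : ℝ) = inner ℝ (z ℓ) (T u) := hT.isSymmetric (z ℓ) u
        rw [← hsym, heig ℓ, real_inner_smul_left]
      rw [hTzu] at h
      have hml : (μ ℓ - lamb) * (inner ℝ (z ℓ) u : ℝ) = 0 := by ring_nf; ring_nf at h; linarith
      rcases mul_eq_zero.mp hml with h' | h'
      · exact absurd (sub_eq_zero.mp h') (hne ℓ)
      · exact h'
    have hs := b.sum_repr' u
    simp only [hbcoe, hin, zero_smul, Finset.sum_const_zero] at hs
    exact hs.symm
  have hμ1ne : μ₁ - lamb ≠ 0 := sub_ne_zero.mpr (hne ⟨0, hn⟩)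
  -- A z₁ = (μ₁ - lamb)⁻¹ • z₁
  have hAz : A z₁ = (μ₁ - lamb)⁻¹ • z₁ := by
    have h0 : T (A z₁ - (μ₁ - lamb)⁻¹ • z₁) - lamb • (A z₁ - (μ₁ - lamb)⁻¹ • z₁) = 0 := by
      have hTA : T (A z₁) = z₁ + lamb • A z₁ := by
        have := hA z₁; linear_combination (norm := module) this
      have hTz : T z₁ = μ₁ • z₁ := heig ⟨0, hn⟩
      rw [map_sub, map_smul, hTA, hTz]
      match_scalars <;> field_simp <;> ring
    exact sub_eq_zero.mp (key _ h0)
  have hz1norm : ‖z₁‖ = 1 := hON.1 ⟨0, hn⟩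
  have hAznorm : ‖A z₁‖ = |μ₁ - lamb|⁻¹ := by
    rw [hAz, norm_smul, hz1norm, mul_one, Real.norm_eq_abs, abs_inv]
  -- expand z₁ in coordinates
  have hz1sum : ∑ j, z₁ j • EuclideanSpace.single j (1:ℝ) = z₁ := by
    have hrep := (EuclideanSpace.basisFun (Fin n) ℝ).sum_repr' z₁
    simpa [EuclideanSpace.basisFun_apply, EuclideanSpace.inner_single_left] using hrep
  have hAz1le : ‖A z₁‖ ≤ (∑ j, |z₁ j|) * ‖x‖ := by
    calc ‖A z₁‖ = ‖∑ j, z₁ j • A (EuclideanSpace.single j (1:ℝ))‖ := by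
          conv_lhs => rw [← hz1sum]
          rw [map_sum]
          simp_rw [map_smul]
      _ ≤ ∑ j, ‖z₁ j • A (EuclideanSpace.single j (1:ℝ))‖ := norm_sum_le _ _
      _ ≤ ∑ j, |z₁ j| * ‖x‖ := by
          apply Finset.sum_le_sum
          intro j _
          rw [norm_smul, Real.norm_eq_abs]
          exact mul_le_mul_of_nonneg_left (hx ▸ hj₀ j) (abs_nonneg _)
      _ = (∑ j, |z₁ j|) * ‖x‖ := by rw [Finset.sum_mul]
  have hsumabs : (∑ j, |z₁ j|) ≤ Real.sqrt n := by
    have hsq : (∑ j, |z₁ j|) ^ 2 ≤ (n : ℝ) * ∑ j, |z₁ j| ^ 2 := by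
      have := sq_sum_le_card_mul_sum_sq (s := Finset.univ) (f := fun j => |z₁ j|)
      simpa using this
    have hnorm1 : ∑ j, |z₁ j| ^ 2 = 1 := by
      have hthis := hz1norm
      rw [EuclideanSpace.norm_eq] at hthis
      have h' := congrArg (· ^ 2) hthis
      simp only [one_pow] at h'
      rw [Real.sq_sqrt (by positivity)] at h'
      simpa [Real.norm_eq_abs] using h'
    rw [hnorm1, mul_one] at hsq
    nlinarith [Real.sq_sqrt (show (0:ℝ) ≤ n by positivity), Real.sqrt_nonneg (n:ℝ),
      Finset.sum_nonneg (fun j (_ : j ∈ Finset.univ) => abs_nonneg (z₁ j))]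
  have hxpos : 0 < ‖x‖ := norm_pos_iff.mpr hx0
  have hsn : 0 < Real.sqrt n := Real.sqrt_pos.mpr (by exact_mod_cast hn)
  -- ‖x‖⁻¹ ≤ δ √n
  have hinv : ‖x‖⁻¹ ≤ δ * Real.sqrt n := by
    have h3 : δ⁻¹ ≤ ‖A z₁‖ := by
      rw [hAznorm, ← one_div, ← one_div]
      exact one_div_le_one_div_of_le h1 h2
    have h4 : δ⁻¹ ≤ (∑ j, |z₁ j|) * ‖x‖ := h3.trans hAz1le
    have h4' : (∑ j, |z₁ j|) * ‖x‖ ≤ Real.sqrt n * ‖x‖ :=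
      mul_le_mul_of_nonneg_right hsumabs hxpos.le
    have h5 : (1:ℝ) ≤ δ * Real.sqrt n * ‖x‖ := by
      have h := mul_le_mul_of_nonneg_left (h4.trans h4') hδ.le
      rw [mul_inv_cancel₀ hδ.ne'] at h
      linarith [(by ring : δ * (Real.sqrt n * ‖x‖) = δ * Real.sqrt n * ‖x‖)]
    have h6 := (div_le_iff₀ hxpos).mpr h5
    simpa [one_div] using h6
  -- residual
  have hwnorm : ‖w‖ = 1 := by
    rw [hw, norm_smul, norm_inv, norm_norm, inv_mul_cancel₀ hxpos.ne']
  have hres : T w - μ₁ • w = ‖x‖⁻¹ • EuclideanSpace.single j₀ (1:ℝ) + (lamb - μ₁) • w := by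
    have hTx : T x - lamb • x = EuclideanSpace.single j₀ (1:ℝ) := by rw [hx]; exact hA _
    rw [hw, map_smul, ← hTx]
    match_scalars <;> ring
  rw [hres]
  calc ‖‖x‖⁻¹ • EuclideanSpace.single j₀ (1:ℝ) + (lamb - μ₁) • w‖
      ≤ ‖‖x‖⁻¹ • EuclideanSpace.single j₀ (1:ℝ)‖ + ‖(lamb - μ₁) • w‖ := norm_add_le _ _
    _ = ‖x‖⁻¹ + |lamb - μ₁| := by
        rw [norm_smul, norm_smul, EuclideanSpace.norm_single, hwnorm]
        simp [abs_of_nonneg (inv_nonneg.mpr hxpos.le)]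
    _ ≤ δ * Real.sqrt n + δ := by
        have : |lamb - μ₁| ≤ δ := by rw [abs_sub_comm]; exact h2
        linarith
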